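/- Let n be a positive integer, Q ∈ ℝ^{n×n} with Q ≻ 0, and R ∈ ℝ^{n×n} an arbitrary matrix. Then there exist μ > 0 and σ > 0 such that μ·[[-Q, R],[Rᵀ, 0]] − [[−σ²·I, 0],[0, I]] ≺ 0, where [[P, R],[Rᵀ, W]] denotes the 2n×2n block matrix with the indicated n×n blocks. -/

import Mathlib

open Matrix

lemma aux_dot_self_nonneg {n : ℕ} (v : Fin n → ℝ) : 0 ≤ v ⬝ᵥ v :=
  Finset.sum_nonneg fun i _ => mul_self_nonneg _

lemma aux_dot_self_pos {n : ℕ} {v : Fin n → ℝ} (hv : v ≠ 0) : 0 < v ⬝ᵥ v :=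
  lt_of_le_of_ne (aux_dot_self_nonneg v)
    (fun h => hv (dotProduct_self_eq_zero.mp h.symm))

lemma aux_cs {n : ℕ} (a b : Fin n → ℝ) : (a ⬝ᵥ b) ^ 2 ≤ (a ⬝ᵥ a) * (b ⬝ᵥ b) := by
  have := Finset.sum_mul_sq_le_sq_mul_sq Finset.univ a b
  simpa [dotProduct, pow_two] using this

lemma aux_frob {n : ℕ} (M : Matrix (Fin n) (Fin n) ℝ) (x : Fin n → ℝ) :
    (M *ᵥ x) ⬝ᵥ (M *ᵥ x) ≤ (∑ i, ∑ j, (M i j) ^ 2) * (x ⬝ᵥ x) := by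
  have hx : x ⬝ᵥ x = ∑ j, (x j) ^ 2 := by simp [dotProduct, pow_two]
  calc (M *ᵥ x) ⬝ᵥ (M *ᵥ x) = ∑ i, (∑ j, M i j * x j) ^ 2 := by
        simp [dotProduct, mulVec, pow_two]
    _ ≤ ∑ i, (∑ j, (M i j) ^ 2) * (∑ j, (x j) ^ 2) :=
        Finset.sum_le_sum fun i _ => Finset.sum_mul_sq_le_sq_mul_sq _ _ _
    _ = (∑ i, ∑ j, (M i j) ^ 2) * (x ⬝ᵥ x) := by rw [hx, Finset.sum_mul]

open scoped MatrixOrder in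
lemma aux_lower {n : ℕ} (Q : Matrix (Fin n) (Fin n) ℝ) (hQ : Q.PosDef) :
    ∃ c : ℝ, 0 < c ∧ ∀ x : Fin n → ℝ, c * (x ⬝ᵥ x) ≤ x ⬝ᵥ Q *ᵥ x := by
  set S := CFC.sqrt Q with hSdef
  have hSS : S * S = Q := CFC.sqrt_mul_sqrt_self Q (nonneg_iff_posSemidef.mpr hQ.posSemidef)
  have hSt : Sᵀ = S := by
    have h2 : Sᴴ = S := (nonneg_iff_posSemidef.mp (CFC.sqrt_nonneg Q)).1
    rwa [conjTranspose_eq_transpose_of_trivial] at h2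
  have hdet : IsUnit S.det := by
    have h1 : 0 < Q.det := hQ.det_pos
    rw [← hSS, det_mul] at h1
    have : S.det ≠ 0 := by intro h; rw [h] at h1; simp at h1
    exact isUnit_iff_ne_zero.mpr this
  have hinv : S * S⁻¹ = 1 := mul_nonsing_inv S hdet
  set D := (∑ i, ∑ j, (S⁻¹ i j) ^ 2) + 1 with hD
  have hD0 : 0 < D := by
    rw [hD]
    have : 0 ≤ ∑ i, ∑ j, (S⁻¹ i j) ^ 2 :=
      Finset.sum_nonneg fun i _ => Finset.sum_nonneg fun j _ => sq_nonneg _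
    linarith
  refine ⟨1 / D, by positivity, fun x => ?_⟩
  have hQx : x ⬝ᵥ Q *ᵥ x = (S *ᵥ x) ⬝ᵥ (S *ᵥ x) := by
    rw [← hSS, ← mulVec_mulVec, dotProduct_mulVec (v := x) (w := S *ᵥ x),
      ← hSt, vecMul_transpose, hSt]
  have hxx : x ⬝ᵥ x = (S *ᵥ x) ⬝ᵥ (S⁻¹ *ᵥ x) := by
    rw [dotProduct_mulVec (v := S *ᵥ x), vecMul_mulVec, hSt, hinv, vecMul_one]
  have hQnn : 0 ≤ x ⬝ᵥ Q *ᵥ x := by rw [hQx]; exact aux_dot_self_nonneg _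
  have hfr : (S⁻¹ *ᵥ x) ⬝ᵥ (S⁻¹ *ᵥ x) ≤ D * (x ⬝ᵥ x) := by
    have := aux_frob S⁻¹ x
    have hxnn := aux_dot_self_nonneg x
    nlinarith
  have hcs := aux_cs (S *ᵥ x) (S⁻¹ *ᵥ x)
  rw [← hxx, ← hQx] at hcs
  -- (x ⬝ᵥ x)^2 ≤ (xᵀQx) * ((S⁻¹x)⬝(S⁻¹x)) ≤ (xᵀQx) * D * (x⬝x)
  have key : (x ⬝ᵥ x) ^ 2 ≤ (x ⬝ᵥ Q *ᵥ x) * (D * (x ⬝ᵥ x)) := by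
    calc (x ⬝ᵥ x) ^ 2 ≤ (x ⬝ᵥ Q *ᵥ x) * ((S⁻¹ *ᵥ x) ⬝ᵥ (S⁻¹ *ᵥ x)) := by nlinarith [aux_cs (S *ᵥ x) (S⁻¹ *ᵥ x)]
      _ ≤ (x ⬝ᵥ Q *ᵥ x) * (D * (x ⬝ᵥ x)) := mul_le_mul_of_nonneg_left hfr hQnn
  rcases eq_or_lt_of_le (aux_dot_self_nonneg x) with h0 | h0
  · rw [← h0]; simpa using hQnn
  · rw [div_mul_eq_mul_div, div_le_iff₀ hD0]
    nlinarith
theorem stmt_4 (n : ℕ) (hn : 0 < n)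
    (Q R : Matrix (Fin n) (Fin n) ℝ) (hQ : Q.PosDef) :
    ∃ μ σ : ℝ, 0 < μ ∧ 0 < σ ∧
      (-(μ • Matrix.fromBlocks (-Q) R Rᵀ (0 : Matrix (Fin n) (Fin n) ℝ) -
          Matrix.fromBlocks ((-(σ ^ 2)) • (1 : Matrix (Fin n) (Fin n) ℝ)) 0 0
            (1 : Matrix (Fin n) (Fin n) ℝ))).PosDef := by
  obtain ⟨c, hc, hlow⟩ := aux_lower Q hQ
  set C : ℝ := (∑ i, ∑ j, (Rᵀ i j) ^ 2) + 1 with hCdef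
  have hC : 0 < C := by
    rw [hCdef]
    have : 0 ≤ ∑ i, ∑ j, (Rᵀ i j) ^ 2 :=
      Finset.sum_nonneg fun i _ => Finset.sum_nonneg fun j _ => sq_nonneg _
    linarith
  set μ : ℝ := c / (2 * C) with hμdef
  have hμ : 0 < μ := by positivity
  set σ : ℝ := Real.sqrt (μ * c / 4) with hσdef
  have hσ : 0 < σ := Real.sqrt_pos.mpr (by positivity)
  have hσ2 : σ ^ 2 = μ * c / 4 := Real.sq_sqrt (by positivity)
  have hμC : μ * C = c / 2 := by rw [hμdef]; field_simp
  refine ⟨μ, σ, hμ, hσ, ?_⟩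
  set A : Matrix (Fin n) (Fin n) ℝ := μ • Q - (σ ^ 2) • 1 with hAdef
  set B : Matrix (Fin n) (Fin n) ℝ := -(μ • R) with hBdef
  have hQt : Qᵀ = Q := by
    have h2 : Qᴴ = Q := hQ.1
    rwa [conjTranspose_eq_transpose_of_trivial] at h2
  have hM : -(μ • Matrix.fromBlocks (-Q) R Rᵀ (0 : Matrix (Fin n) (Fin n) ℝ) -
          Matrix.fromBlocks ((-(σ ^ 2)) • (1 : Matrix (Fin n) (Fin n) ℝ)) 0 0
            (1 : Matrix (Fin n) (Fin n) ℝ)) = Matrix.fromBlocks A B Bᵀ 1 := by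
    ext i j
    rcases i with i | i <;> rcases j with j | j <;>
      simp [hAdef, hBdef, Matrix.fromBlocks, Matrix.sub_apply, Matrix.smul_apply,
        Matrix.neg_apply, Matrix.one_apply, Matrix.transpose_apply, smul_eq_mul] <;> ring
  rw [hM, posDef_iff_dotProduct_mulVec]
  constructor
  · -- IsHermitian
    show (Matrix.fromBlocks A B Bᵀ 1)ᴴ = _
    rw [conjTranspose_eq_transpose_of_trivial, fromBlocks_transpose,
      transpose_transpose, transpose_one]
    congr 1
    rw [hAdef, transpose_sub, transpose_smul, transpose_smul, hQt, transpose_one]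
  · intro x hx
    set u : Fin n → ℝ := x ∘ Sum.inl with hu
    set v : Fin n → ℝ := x ∘ Sum.inr with hv
    have hxe : x = Sum.elim u v := by ext (i | i) <;> rfl
    set t : Fin n → ℝ := Rᵀ *ᵥ u with ht
    have hBv : u ⬝ᵥ B *ᵥ v = -(μ * (t ⬝ᵥ v)) := by
      rw [hBdef, neg_mulVec, dotProduct_neg, smul_mulVec, dotProduct_smul,
        smul_eq_mul, dotProduct_mulVec, ← mulVec_transpose, ← ht]
    have hform : x ⬝ᵥ (Matrix.fromBlocks A B Bᵀ 1) *ᵥ x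
        = μ * (u ⬝ᵥ Q *ᵥ u) - σ ^ 2 * (u ⬝ᵥ u) - 2 * μ * (t ⬝ᵥ v) + v ⬝ᵥ v := by
      rw [hxe, fromBlocks_mulVec, sumElim_dotProduct_sumElim, dotProduct_add,
        dotProduct_add, one_mulVec]
      simp only [Sum.elim_comp_inl, Sum.elim_comp_inr]
      have h1 : v ⬝ᵥ Bᵀ *ᵥ u = u ⬝ᵥ B *ᵥ v := by
        rw [dotProduct_mulVec, vecMul_transpose, dotProduct_comm]
      have h2 : u ⬝ᵥ A *ᵥ u = μ * (u ⬝ᵥ Q *ᵥ u) - σ ^ 2 * (u ⬝ᵥ u) := by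
        rw [hAdef, sub_mulVec, dotProduct_sub, smul_mulVec, dotProduct_smul,
          smul_mulVec, one_mulVec, dotProduct_smul, smul_eq_mul, smul_eq_mul]
      rw [h1, hBv, h2]
      ring
    rw [show star x = x from funext fun i => star_trivial _, hform]
    have hfr : t ⬝ᵥ t ≤ C * (u ⬝ᵥ u) := by
      have h1 := aux_frob Rᵀ u
      have h2 := aux_dot_self_nonneg u
      rw [← ht] at h1
      nlinarith
    have hsq : 0 ≤ (v - μ • t) ⬝ᵥ (v - μ • t) := aux_dot_self_nonneg _
    have hexp : (v - μ • t) ⬝ᵥ (v - μ • t)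
        = v ⬝ᵥ v - 2 * μ * (t ⬝ᵥ v) + μ ^ 2 * (t ⬝ᵥ t) := by
      simp only [sub_dotProduct, dotProduct_sub, smul_dotProduct, dotProduct_smul,
        smul_eq_mul, dotProduct_comm v t]
      ring
    rw [hexp] at hsq
    by_cases hu0 : u = 0
    · have hv0 : v ≠ 0 := by
        intro h
        apply hx
        rw [hxe, hu0, h]
        ext (i | i) <;> rfl
      have ht0 : t = 0 := by rw [ht, hu0, mulVec_zero]
      rw [hu0, ht0]
      simp only [zero_dotProduct, dotProduct_zero, mul_zero, sub_zero, zero_add]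
      exact aux_dot_self_pos hv0
    · have huu : 0 < u ⬝ᵥ u := aux_dot_self_pos hu0
      have hlow' := hlow u
      have e1 : μ ^ 2 * (t ⬝ᵥ t) ≤ μ * (c / 2) * (u ⬝ᵥ u) := by
        have h := mul_le_mul_of_nonneg_left hfr (sq_nonneg μ)
        have h' : μ ^ 2 * (C * (u ⬝ᵥ u)) = μ * (μ * C) * (u ⬝ᵥ u) := by ring
        rw [h', hμC] at h
        exact h
      have e2 : μ * (c * (u ⬝ᵥ u)) ≤ μ * (u ⬝ᵥ Q *ᵥ u) :=
        mul_le_mul_of_nonneg_left hlow' hμ.le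
      have e3 : 0 < μ * c * (u ⬝ᵥ u) := by positivity
      nlinarith [hσ2]
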